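/- Assume Q has a unique source s and satisfies condition (b). Then the set L(Q) ∩ {(r_i) : r_s = 0}, parametrizing pre-projective tilting modules containing P(s), has cardinality at most 2^{n-1}, where n = #Q₀. -/

import Mathlib

/-! Combinatorics of quivers: walks in the double quiver, the function `l_Q`,
paths, acyclicity, condition (b), unique sources, and the set `L(Q)`.
A quiver on a vertex type `V` is encoded by its family of arrow types
`H : V → V → Type`. -/

/-- Walks in the double quiver `Q̃` of the quiver `Q` encoded by `H`:
a step may traverse an arrow forwards (`fwd`) or backwards (`bwd`). -/
inductive DWalk {V : Type} (H : V → V → Type) : V → V → Type where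
  | nil : (a : V) → DWalk H a a
  | fwd : {a b c : V} → DWalk H a b → H b c → DWalk H a c
  | bwd : {a b c : V} → DWalk H a b → H c b → DWalk H a c

/-- `c⁺(w)`: the number of forward (original) arrows used by a walk in `Q̃`. -/
def DWalk.cplus {V : Type} {H : V → V → Type} : {a b : V} → DWalk H a b → ℕ
  | _, _, .nil _ => 0
  | _, _, .fwd w _ => DWalk.cplus w + 1
  | _, _, .bwd w _ => DWalk.cplus w

/-- `l_Q(i,j)`: the minimal number of forward arrows over all walks from `i`
to `j` in the double quiver `Q̃`.  (In particular `l_Q(i,i) = 0`.) -/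
noncomputable def ell {V : Type} (H : V → V → Type) (i j : V) : ℕ :=
  sInf {m | ∃ w : DWalk H i j, DWalk.cplus w = m}

/-- Directed paths in the quiver `Q` itself. -/
inductive QPath {V : Type} (H : V → V → Type) : V → V → Type where
  | nil : (a : V) → QPath H a a
  | cons : {a b c : V} → QPath H a b → H b c → QPath H a c

def QPath.length {V : Type} {H : V → V → Type} : {a b : V} → QPath H a b → ℕ
  | _, _, .nil _ => 0
  | _, _, .cons p _ => QPath.length p + 1

/-- `Q` has no loops and no (nontrivial, directed) cycles. -/
def QuiverAcyclic {V : Type} (H : V → V → Type) : Prop :=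
  ∀ (a : V) (p : QPath H a a), QPath.length p = 0

/-- `Q` is connected (any two vertices are joined by a walk in `Q̃`). -/
def QuiverConnected {V : Type} (H : V → V → Type) : Prop :=
  ∀ a b : V, Nonempty (DWalk H a b)

/-- Condition (b): for every vertex `x`, `#s(x) + #t(x) > 1`. -/
def CondB {V : Type} (H : V → V → Type) [Fintype V] [∀ a b, Fintype (H a b)] : Prop :=
  ∀ x : V, 1 < ∑ y : V, (Fintype.card (H x y) + Fintype.card (H y x))

/-- `s` is the unique source (vertex with no incoming arrows) of `Q`. -/
def UniqueSource {V : Type} (H : V → V → Type) (s : V) : Prop :=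
  (∀ y : V, IsEmpty (H y s)) ∧ ∀ t : V, (∀ y : V, IsEmpty (H y t)) → t = s

/-- The set `L(Q) = {(r_i) ∈ ℤ_{≥0}^{Q₀} ∣ r_j ≤ r_i + l_Q(i,j) for all i,j}`. -/
def LSet {V : Type} (H : V → V → Type) : Set (V → ℕ) :=
  {r | ∀ i j : V, r j ≤ r i + ell H i j}


/-- Assume the finite connected acyclic quiver `Q` (with `n`
vertices) has a unique source `s` and satisfies condition (b).  Then the set
`L(Q) ∩ {(r_i) : r_s = 0}`, parametrizing the pre-projective tilting modules
containing `P(s)`, is finite of cardinality at most `2^(n-1)`. -/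
theorem lk_source_card_le {V : Type} [Fintype V]
    (H : V → V → Type) [∀ a b, Fintype (H a b)]
    (hacyc : QuiverAcyclic H) (hconn : QuiverConnected H) (hb : CondB H)
    (s : V) (hs : UniqueSource H s) :
    {r : V → ℕ | r ∈ LSet H ∧ r s = 0}.Finite ∧
      Nat.card {r : V → ℕ | r ∈ LSet H ∧ r s = 0} ≤ 2 ^ (Fintype.card V - 1) := by

  classical
  set R : V → V → Prop := fun a b => Nonempty (H a b) with hR
  have hpath : ∀ a b, Relation.TransGen R a b → ∃ p : QPath H a b, 0 < p.length := by
    intro a b h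
    induction h with
    | single h => exact ⟨QPath.cons (QPath.nil _) h.some, by simp [QPath.length]⟩
    | tail _ h ih =>
      obtain ⟨p, _⟩ := ih
      exact ⟨QPath.cons p h.some, by simp [QPath.length]⟩
  have hwf : WellFounded (Relation.TransGen R) := by
    haveI : IsTrans V (Relation.TransGen R) := ⟨fun _ _ _ => Relation.TransGen.trans⟩
    haveI : IsIrrefl V (Relation.TransGen R) := by
      constructor
      intro a h
      obtain ⟨p, hp⟩ := hpath a a h
      rw [hacyc a p] at hp
      exact Nat.lt_irrefl 0 hp
    exact Finite.wellFounded_of_trans_of_irrefl _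
  have hex : ∀ i, i ≠ s → ∃ y, Nonempty (H y i) := by
    intro i hi
    by_contra h
    push_neg at h
    exact hi (hs.2 i fun y => h y)
  let t : V → V := fun i => if h : i ≠ s then (hex i h).choose else s
  have ht : ∀ i (h : i ≠ s), Nonempty (H (t i) i) := by
    intro i h
    simp only [t, dif_pos h]
    exact (hex i h).choose_spec
  have hell1 : ∀ i (h : i ≠ s), ell H (t i) i ≤ 1 := by
    intro i h
    exact Nat.sInf_le ⟨DWalk.fwd (DWalk.nil _) (ht i h).some, by simp [DWalk.cplus]⟩
  have hell0 : ∀ i (h : i ≠ s), ell H i (t i) = 0 := by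
    intro i h
    exact Nat.le_zero.mp (Nat.sInf_le ⟨DWalk.bwd (DWalk.nil _) (ht i h).some, by simp [DWalk.cplus]⟩)
  have hstep : ∀ r ∈ LSet H, ∀ i (h : i ≠ s),
      r (t i) ≤ r i ∧ r i ≤ r (t i) + 1 := by
    intro r hr i h
    constructor
    · have := hr i (t i)
      rw [hell0 i h] at this
      simpa using this
    · have := hr (t i) i
      exact this.trans (Nat.add_le_add_left (hell1 i h) _)
  set S := {r : V → ℕ | r ∈ LSet H ∧ r s = 0} with hS
  let F : S → ({i : V // i ≠ s} → Bool) :=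
    fun r i => decide (r.1 i.1 = r.1 (t i.1) + 1)
  have hFinj : Function.Injective F := by
    intro r r' hF
    apply Subtype.ext
    funext i
    induction i using hwf.induction with
    | _ i ih =>
      by_cases hi : i = s
      · subst hi; rw [r.2.2, r'.2.2]
      · have hti : r.1 (t i) = r'.1 (t i) :=
          ih (t i) (Relation.TransGen.single (ht i hi))
        have hb2 : (r.1 i = r.1 (t i) + 1) ↔ (r'.1 i = r'.1 (t i) + 1) := by
          have := congrFun hF ⟨i, hi⟩
          simpa [F, decide_eq_decide] using this
        have h1 := hstep r.1 r.2.1 i hi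
        have h2 := hstep r'.1 r'.2.1 i hi
        by_cases hc : r.1 i = r.1 (t i) + 1
        · rw [hc, hti, hb2.mp hc]
        · have hc' : ¬ (r'.1 i = r'.1 (t i) + 1) := fun h => hc (hb2.mpr h)
          omega
  haveI : Finite S := Finite.of_injective F hFinj
  refine ⟨Set.toFinite _, ?_⟩
  calc Nat.card S ≤ Nat.card ({i : V // i ≠ s} → Bool) :=
        Nat.card_le_card_of_injective F hFinj
    _ = 2 ^ (Fintype.card V - 1) := by
        rw [Nat.card_eq_fintype_card, Fintype.card_fun, Fintype.card_bool]
        congr 1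
        rw [Fintype.card_subtype_compl, Fintype.card_subtype_eq]
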